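/- Let a ∈ ℂ. In the quotient V = (L × L)/range(T) for the quartic curve u² = x⁴ − 2ax² + 1, for every natural number k the class of (X^(2k+1), 0) equals (Q k).eval a times the class of (X, 0); that is, [x^(2k+1)] = P_k(a)·ω₃, where P_k is the k-th Legendre polynomial: the odd-positive sector is governed by the Legendre family. -/
import Mathlib


open LaurentPolynomial


lemma smul_eq_C_mul' (c : ℂ) (x : LaurentPolynomial ℂ) : c • x = C c * x :=
  Algebra.smul_def c x

lemma quart_alg (a : ℂ) (n : ℤ) :
    ((T 4 - 2 * C a * T 2 + 1 : LaurentPolynomial ℂ)) * ((n : ℂ) • T (n-1))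
      + (2 * T 3 - 2 * C a * T 1) * T n
    = ((n:ℂ)+2) • T (n+3) - ((2*(n:ℂ)+2) * a) • T (n+1) + (n:ℂ) • T (n-1) := by
  have h1 : (T (n+3) : LaurentPolynomial ℂ) = T (n-1) * T 4 := by rw [← T_add]; ring_nf
  have h2 : (T (n+1) : LaurentPolynomial ℂ) = T (n-1) * T 2 := by rw [← T_add]; ring_nf
  have h3 : (T n : LaurentPolynomial ℂ) = T (n-1) * T 1 := by rw [← T_add]; ring_nf
  have h4 : ((T 1 : LaurentPolynomial ℂ))^2 = T 2 := by rw [sq, ← T_add]; norm_num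
  have h5 : (T 3 * T 1 : LaurentPolynomial ℂ) = T 4 := (T_add 3 1).symm
  simp only [smul_eq_C_mul', map_add, map_mul, map_ofNat]
  rw [h1, h2, h3]
  ring_nf
  rw [h4, mul_assoc (T (-1+n) : LaurentPolynomial ℂ) (T 3) (T 1), h5]
  ring_nf

/-- The linear map `T(f,g) = (p * D g + w * g, D f)` on `L × L`, encoding the distinguished
derivation of the superelliptic algebra (even part `L`, odd part `L * u`), where `p = P`
and `w` is the odd-weight term `u * u' = P'/2`. -/
noncomputable def Tgen (p w : LaurentPolynomial ℂ)
    (D : LaurentPolynomial ℂ →ₗ[ℂ] LaurentPolynomial ℂ) :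
    (LaurentPolynomial ℂ × LaurentPolynomial ℂ) →ₗ[ℂ]
      (LaurentPolynomial ℂ × LaurentPolynomial ℂ) where
  toFun fg := (p * D fg.2 + w * fg.2, D fg.1)
  map_add' x y := by
    ext
    · simp only [Prod.fst_add, Prod.snd_add, map_add]
      ring_nf
    · simp [Prod.snd_add]
  map_smul' c x := by
    ext
    · simp only [Prod.smul_fst, Prod.smul_snd, map_smul, smul_add, mul_smul_comm,
        RingHom.id_apply]
    · simp

/-- The derivation map for the quartic curve: `P = X^4 - 2aX^2 + 1`, `P'/2 = 2X^3 - 2aX`. -/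
noncomputable def Tquart (a : ℂ)
    (D : LaurentPolynomial ℂ →ₗ[ℂ] LaurentPolynomial ℂ) :
    (LaurentPolynomial ℂ × LaurentPolynomial ℂ) →ₗ[ℂ]
      (LaurentPolynomial ℂ × LaurentPolynomial ℂ) :=
  Tgen (T 4 - 2 * C a * T 2 + 1) (2 * T 3 - 2 * C a * T 1) D

/-- in the quartic quotient, the odd-positive sector is governed by the
Legendre family: `[x^(2k+1)] = P_k(a) * ω₃`. -/
theorem quartic_odd_sector_legendre (a : ℂ)
    (D : LaurentPolynomial ℂ →ₗ[ℂ] LaurentPolynomial ℂ)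
    (hD : ∀ n : ℤ, D (T n) = (n : ℂ) • T (n - 1))
    (Q : ℕ → Polynomial ℂ) (hQ0 : Q 0 = 1) (hQ1 : Q 1 = Polynomial.X)
    (hQrec : ∀ n : ℕ, ((n : ℂ) + 2) • Q (n + 2) =
      (2 * (n : ℂ) + 3) • (Polynomial.X * Q (n + 1)) - ((n : ℂ) + 1) • Q n)
    (k : ℕ) :
    (LinearMap.range (Tquart a D)).mkQ (T (2 * (k : ℤ) + 1), 0) =
      (Q k).eval a • (LinearMap.range (Tquart a D)).mkQ (T 1, 0) := by
  set π := (LinearMap.range (Tquart a D)).mkQ with hπ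
  have key : ∀ n : ℤ, ((n:ℂ)+2) • π (T (n+3), 0)
      = ((2*(n:ℂ)+2) * a) • π (T (n+1), 0) - (n:ℂ) • π (T (n-1), 0) := by
    intro n
    have h0 : π (Tquart a D (0, T n)) = 0 := by
      rw [hπ, Submodule.mkQ_apply, Submodule.Quotient.mk_eq_zero]
      exact LinearMap.mem_range_self _ _
    have hv : Tquart a D (0, T n)
        = ((n:ℂ)+2) • ((T (n+3), 0) : LaurentPolynomial ℂ × LaurentPolynomial ℂ)
          - ((2*(n:ℂ)+2) * a) • (T (n+1), (0:LaurentPolynomial ℂ))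
          + (n:ℂ) • (T (n-1), (0:LaurentPolynomial ℂ)) := by
      have : Tquart a D (0, T n)
          = ((T 4 - 2 * C a * T 2 + 1) * D (T n) + (2 * T 3 - 2 * C a * T 1) * T n, D 0) := rfl
      rw [this, hD, map_zero, quart_alg]
      simp [Prod.ext_iff]
    rw [hv] at h0
    simp only [map_add, map_sub, map_smul] at h0
    linear_combination (norm := module) h0
  induction k using Nat.twoStepInduction with
  | zero =>
    norm_num
    rw [hQ0]
    simp
  | one =>
    have h := key 0
    norm_num at h
    rw [hQ1]
    norm_num
    have h2 : (2:ℂ) ≠ 0 := two_ne_zero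
    apply smul_right_injective _ h2
    show (2:ℂ) • π (T 3, 0) = (2:ℂ) • (a • π (T 1, 0))
    linear_combination (norm := module) h
  | more k ih2 ih1 =>
    have h := key (2*(k:ℤ)+2)
    have e1 : (2*(k:ℤ)+2)+3 = 2*((k:ℤ)+2)+1 := by ring
    have e2 : (2*(k:ℤ)+2)+1 = 2*((k:ℤ)+1)+1 := by ring
    have e3 : (2*(k:ℤ)+2)-1 = 2*(k:ℤ)+1 := by ring
    rw [e1, e2, e3] at h
    push_cast at h ih1 ih2 ⊢
    rw [ih1, ih2] at h
    have hr := congrArg (Polynomial.eval a) (hQrec k)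
    simp only [Polynomial.eval_smul, Polynomial.eval_sub, Polynomial.eval_mul,
      Polynomial.eval_X, smul_eq_mul] at hr
    have hc : (2*(k:ℂ)+4) ≠ 0 := by
      have h1 : ((k+2:ℕ):ℂ) ≠ 0 := Nat.cast_ne_zero.mpr (by omega)
      push_cast at h1
      intro hcon; exact h1 (by linear_combination hcon/2)
    apply smul_right_injective _ hc
    show (2*(k:ℂ)+4) • π (T (2*((k:ℤ)+2)+1), 0)
      = (2*(k:ℂ)+4) • (Polynomial.eval a (Q (k+2)) • π (T 1, 0))
    have h' : (2*(k:ℂ)+4) • π (T (2*((k:ℤ)+2)+1), 0)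
        = ((2*(2*(k:ℂ)+2)+2)*a*Polynomial.eval a (Q (k+1))
            - (2*(k:ℂ)+2)*Polynomial.eval a (Q k)) • π (T 1, 0) := by
      linear_combination (norm := module) h
    rw [h']
    match_scalars
    linear_combination (-2)*hr
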